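/- Let R be a reduced Noetherian commutative ring and M a finitely generated R-module such that the function p ↦ dim_{κ(p)}(M ⊗_R κ(p)) is constant on Spec R, where κ(p) is the residue field at the prime p. Then M is a projective (equivalently, finite locally free) R-module. -/

import Mathlib

open TensorProduct

set_option synthInstance.maxHeartbeats 1000000
set_option maxHeartbeats 2000000

lemma fiber_finrank_eq_aux {R M : Type*} [CommRing R] [AddCommGroup M] [Module R M]
    (p : PrimeSpectrum R) (F : Type*) [Field F] [Algebra R F]
    [Algebra (Localization.AtPrime p.asIdeal) F]
    [IsScalarTower R (Localization.AtPrime p.asIdeal) F] :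
    Module.finrank F
      (F ⊗[Localization.AtPrime p.asIdeal] LocalizedModule p.asIdeal.primeCompl M) =
    Module.finrank F (F ⊗[R] M) := by
  have e2 : LocalizedModule p.asIdeal.primeCompl M ≃ₗ[Localization.AtPrime p.asIdeal]
      (Localization.AtPrime p.asIdeal) ⊗[R] M :=
    (IsLocalizedModule.isBaseChange p.asIdeal.primeCompl (Localization.AtPrime p.asIdeal)
      (LocalizedModule.mkLinearMap p.asIdeal.primeCompl M)).equiv.symm
  exact LinearEquiv.finrank_eq
    ((TensorProduct.AlgebraTensorModule.congr (LinearEquiv.refl F F) e2).trans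
      (TensorProduct.AlgebraTensorModule.cancelBaseChange R (Localization.AtPrime p.asIdeal) F F M))


/-- A finitely generated module over a reduced Noetherian ring with constant
fiber dimension is projective. -/
theorem projective_of_constant_fiber_dimension {R M : Type*} [CommRing R]
    [IsNoetherianRing R] [IsReduced R] [AddCommGroup M] [Module R M]
    [Module.Finite R M] (n : ℕ)
    (h : ∀ p : PrimeSpectrum R,
      Module.finrank (IsLocalRing.ResidueField (Localization.AtPrime p.asIdeal))
        ((IsLocalRing.ResidueField (Localization.AtPrime p.asIdeal)) ⊗[R] M) = n) :
    Module.Projective R M := by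
  have : Module.FinitePresentation R M := Module.finitePresentation_of_finite R M
  rw [← Module.freeLocus_eq_univ_iff, Set.eq_univ_iff_forall]
  intro p
  rw [Module.mem_freeLocus]
  set A := Localization.AtPrime p.asIdeal with hA
  set N := LocalizedModule p.asIdeal.primeCompl M with hN
  set k := IsLocalRing.ResidueField A with hk
  have hrank : Module.finrank k (k ⊗[A] N) = n := by
    rw [fiber_finrank_eq_aux p k]; exact h p
  have : Module.Finite A N := inferInstance
  have : Module.Finite k (k ⊗[A] N) := inferInstance
  let b : Module.Basis (Fin n) k (k ⊗[A] N) := Module.finBasisOfFinrankEq k (k ⊗[A] N) hrank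
  choose f hf using TensorProduct.mk_surjective A N k Ideal.Quotient.mk_surjective
  let g : (Fin n → A) →ₗ[A] N := (Pi.basisFun A (Fin n)).constr A (fun i => f (b i))
  have hg : Function.Surjective g := by
    rw [← LinearMap.range_eq_top, Module.Basis.constr_range]
    exact IsLocalRing.span_eq_top_of_tmul_eq_basis (R := A) (f := fun i => f (b i)) b
      (fun i => hf (b i))
  have hinj : Function.Injective g := by
    rw [← LinearMap.ker_eq_bot, eq_bot_iff]
    intro x hx
    rw [LinearMap.mem_ker] at hx
    rw [Submodule.mem_bot]
    funext i
    show x i = (0 : _)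
    have hnil : x i ∈ nilradical A := by
      rw [nilradical_eq_sInf]
      apply Submodule.mem_sInf.mpr
      rintro Q hQ
      haveI hQ : Ideal.IsPrime Q := hQ
      set q : Ideal R := Ideal.comap (algebraMap R A) Q with hq
      haveI : q.IsPrime := inferInstance
      set P : PrimeSpectrum R := ⟨q, inferInstance⟩ with hP
      set F := IsLocalRing.ResidueField (Localization.AtPrime q) with hF
      have hu : ∀ s : p.asIdeal.primeCompl, IsUnit (algebraMap R F s) := by
        rintro ⟨s, hs⟩
        have hsq : s ∉ q := by
          intro hsq
          exact hQ.ne_top (Ideal.eq_top_of_isUnit_mem _ (Ideal.mem_comap.mp hsq)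
            (IsLocalization.map_units A ⟨s, hs⟩))
        have hu1 : IsUnit (algebraMap R (Localization.AtPrime q) s) :=
          IsLocalization.map_units _ (⟨s, hsq⟩ : q.primeCompl)
        rw [IsScalarTower.algebraMap_apply R (Localization.AtPrime q) F]
        exact hu1.map _
      letI : Algebra A F := (IsLocalization.lift (S := A) (M := p.asIdeal.primeCompl) hu).toAlgebra
      haveI : IsScalarTower R A F := IsScalarTower.of_algebraMap_eq' (by
        rw [RingHom.algebraMap_toAlgebra]
        exact (IsLocalization.lift_comp hu).symm)
      have hrkF : Module.finrank F (F ⊗[A] N) = n := by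
        rw [fiber_finrank_eq_aux p F]; exact h P
      have hψs : Function.Surjective (g.baseChange F) := by
        intro z
        induction z with
        | zero => exact ⟨0, map_zero _⟩
        | tmul c m =>
          obtain ⟨v, rfl⟩ := hg m
          exact ⟨c ⊗ₜ v, rfl⟩
        | add y z hy hz =>
          obtain ⟨y', rfl⟩ := hy
          obtain ⟨z', rfl⟩ := hz
          exact ⟨y' + z', map_add _ _ _⟩
      have eqdom : Module.finrank F (F ⊗[A] (Fin n → A)) = n := by
        rw [LinearEquiv.finrank_eq (TensorProduct.piScalarRight A F F (Fin n)),
          Module.finrank_pi, Fintype.card_fin]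
      have hψi : Function.Injective (g.baseChange F) := by
        haveI : Module.Finite F (F ⊗[A] (Fin n → A)) := inferInstance
        exact (LinearMap.injective_iff_surjective_of_finrank_eq_finrank
          (by rw [eqdom, hrkF])).mpr hψs
      have h1x : (1 : F) ⊗ₜ[A] x = 0 := by
        apply hψi
        rw [LinearMap.baseChange_tmul, hx, tmul_zero, map_zero]
      have h2 := congrArg (TensorProduct.piScalarRight A F F (Fin n)) h1x
      rw [map_zero] at h2
      have h3 : algebraMap A F (x i) = 0 := by
        have h2i := congrFun h2 i
        simp only [TensorProduct.piScalarRight_apply, TensorProduct.piScalarRightHom_tmul,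
          Pi.zero_apply] at h2i
        rw [Algebra.smul_def, mul_one] at h2i
        exact h2i
      obtain ⟨⟨m, s⟩, hms⟩ := IsLocalization.mk'_surjective p.asIdeal.primeCompl (x i)
      dsimp only at hms
      have h4 : algebraMap A F (x i * algebraMap R A s) = algebraMap A F (algebraMap R A m) := by
        rw [← hms, IsLocalization.mk'_spec]
      rw [map_mul, h3, zero_mul, ← IsScalarTower.algebraMap_apply] at h4
      have hmq : m ∈ q := by
        replace h4 := h4.symm
        rw [IsScalarTower.algebraMap_apply R (Localization.AtPrime q) F,
          IsLocalRing.ResidueField.algebraMap_eq, IsLocalRing.residue_eq_zero_iff] at h4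
        exact (IsLocalization.AtPrime.to_map_mem_maximal_iff (Localization.AtPrime q) q m).mp
          h4
      have h5 : x i * algebraMap R A s ∈ Q := by
        have hxs : x i * algebraMap R A s = algebraMap R A m := by
          rw [← hms]; exact IsLocalization.mk'_spec A m s
        rw [hxs]
        exact Ideal.mem_comap.mp hmq
      rcases hQ.mem_or_mem h5 with h6 | h6
      · exact h6
      · exact absurd h6 (fun h6' => hQ.ne_top
          (Ideal.eq_top_of_isUnit_mem Q h6' (IsLocalization.map_units A s)))
    rw [nilradical_eq_zero A] at hnil
    simpa using hnil
  exact Module.Free.of_equiv (LinearEquiv.ofBijective g ⟨hinj, hg⟩)
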